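/- For all u, v ∈ [0,1]^d with ‖u − v‖ ≤ 1/2, one has vol[G(u,v)] ≥ 2^{−d} · vol[H(u,v)]. More precisely, letting I := {i : 0 ≤ u^{(i)} ≤ 1/2} and M := {w ∈ ℝ^d : ‖w − u‖ ≤ ‖u − v‖, w^{(i)} ≥ u^{(i)} for i ∈ I, w^{(j)} ≤ u^{(j)} for j ∉ I}, one has M ⊂ G(u,v) and vol[M] = 2^{−d} vol[H(u,v)]. -/

import Mathlib

open MeasureTheory Finset
open scoped ENNReal

/-- The unit cube `[0,1]^d` in `ℝ^d`. -/
def unitCube (d : ℕ) : Set (EuclideanSpace ℝ (Fin d)) :=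
  WithLp.ofLp ⁻¹' (Set.univ.pi fun _ => Set.Icc (0 : ℝ) 1)

/-- `H(u,v)`: the closed Euclidean ball centered at `u` of radius `‖v - u‖`. -/
def Hset {d : ℕ} (u v : EuclideanSpace ℝ (Fin d)) : Set (EuclideanSpace ℝ (Fin d)) :=
  Metric.closedBall u ‖v - u‖

/-- `G(u,v) = H(u,v) ∩ [0,1]^d`. -/
def Gset {d : ℕ} (u v : EuclideanSpace ℝ (Fin d)) : Set (EuclideanSpace ℝ (Fin d)) :=
  Hset u v ∩ unitCube d

section Aux

variable {d : ℕ}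

lemma abs_coord_le_norm (x : EuclideanSpace ℝ (Fin d)) (i : Fin d) : |x i| ≤ ‖x‖ := by
  rw [EuclideanSpace.norm_eq]
  have h1 : |x i| = Real.sqrt (‖x i‖ ^ 2) := by
    rw [Real.sqrt_sq_eq_abs, abs_norm, Real.norm_eq_abs]
  rw [h1]
  apply Real.sqrt_le_sqrt
  exact Finset.single_le_sum (f := fun j => ‖x j‖ ^ 2)
    (fun j _ => by positivity) (Finset.mem_univ i)

/-- sign vector -/
def sgn (σ : Fin d → Bool) (i : Fin d) : ℝ := if σ i then 1 else -1

lemma sgn_mul_self (σ : Fin d → Bool) (i : Fin d) : sgn σ i * sgn σ i = 1 := by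
  unfold sgn; split <;> ring

lemma abs_sgn (σ : Fin d → Bool) (i : Fin d) : |sgn σ i| = 1 := by
  unfold sgn; split <;> simp

/-- closed orthant -/
def Qc (σ : Fin d → Bool) : Set (EuclideanSpace ℝ (Fin d)) :=
  {x | ∀ i, if σ i then 0 ≤ x i else x i ≤ 0}

/-- open orthant -/
def Qo (σ : Fin d → Bool) : Set (EuclideanSpace ℝ (Fin d)) :=
  {x | ∀ i, if σ i then 0 < x i else x i < 0}

lemma Qo_subset_Qc (σ : Fin d → Bool) : Qo σ ⊆ Qc σ := by
  intro x hx i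
  have := hx i
  by_cases h : σ i <;> simp [h] at this ⊢ <;> linarith

lemma isClosed_Qc (σ : Fin d → Bool) : IsClosed (Qc σ) := by
  have : Qc σ = ⋂ i, (EuclideanSpace.proj (𝕜 := ℝ) i) ⁻¹'
      (if σ i then Set.Ici (0:ℝ) else Set.Iic 0) := by
    ext x
    simp only [Qc, Set.mem_setOf_eq, Set.mem_iInter, Set.mem_preimage]
    refine forall_congr' fun i => ?_
    show (if σ i then 0 ≤ x i else x i ≤ 0) ↔ x i ∈ (if σ i then Set.Ici (0:ℝ) else Set.Iic 0)
    split <;> simp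
  rw [this]
  exact isClosed_iInter fun i => by
    split <;> exact (by first
      | exact isClosed_Ici.preimage (EuclideanSpace.proj i).continuous
      | exact isClosed_Iic.preimage (EuclideanSpace.proj i).continuous)

lemma isOpen_Qo (σ : Fin d → Bool) : IsOpen (Qo σ) := by
  have : Qo σ = ⋂ i, (EuclideanSpace.proj (𝕜 := ℝ) i) ⁻¹'
      (if σ i then Set.Ioi (0:ℝ) else Set.Iio 0) := by
    ext x
    simp only [Qo, Set.mem_setOf_eq, Set.mem_iInter, Set.mem_preimage]
    refine forall_congr' fun i => ?_
    show (if σ i then 0 < x i else x i < 0) ↔ x i ∈ (if σ i then Set.Ioi (0:ℝ) else Set.Iio 0)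
    split <;> simp
  rw [this]
  exact isOpen_iInter_of_finite fun i => by
    split <;> first
      | exact isOpen_Ioi.preimage (EuclideanSpace.proj i).continuous
      | exact isOpen_Iio.preimage (EuclideanSpace.proj i).continuous

/-- the flip linear isometry -/
noncomputable def flipE (σ : Fin d → Bool) :
    EuclideanSpace ℝ (Fin d) ≃ₗᵢ[ℝ] EuclideanSpace ℝ (Fin d) where
  toLinearEquiv :=
  { toFun := fun x => WithLp.toLp 2 (fun i => sgn σ i * x i)
    map_add' := by
      intro x y; ext i
      simp only [PiLp.add_apply]; ring
    map_smul' := by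
      intro c x; ext i
      simp only [PiLp.smul_apply, RingHom.id_apply, smul_eq_mul]; ring
    invFun := fun x => WithLp.toLp 2 (fun i => sgn σ i * x i)
    left_inv := by
      intro x; ext i
      show sgn σ i * (sgn σ i * x i) = x i
      rw [← mul_assoc, sgn_mul_self, one_mul]
    right_inv := by
      intro x; ext i
      show sgn σ i * (sgn σ i * x i) = x i
      rw [← mul_assoc, sgn_mul_self, one_mul] }
  norm_map' := by
    intro x
    simp only [EuclideanSpace.norm_eq]
    congr 1
    refine Finset.sum_congr rfl fun i _ => ?_
    show ‖sgn σ i * x i‖ ^ 2 = ‖x i‖ ^ 2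
    rw [norm_mul, Real.norm_eq_abs (sgn σ i), abs_sgn, one_mul]

lemma flipE_apply (σ : Fin d → Bool) (x : EuclideanSpace ℝ (Fin d)) (i : Fin d) :
    flipE σ x i = sgn σ i * x i := rfl

lemma hyperplane_null (i : Fin d) :
    volume {x : EuclideanSpace ℝ (Fin d) | x i = 0} = 0 := by
  have : {x : EuclideanSpace ℝ (Fin d) | x i = 0} =
      (LinearMap.ker ((EuclideanSpace.proj (𝕜 := ℝ) i).toLinearMap) : Set _) := by
    ext x
    simp only [Set.mem_setOf_eq, SetLike.mem_coe, LinearMap.mem_ker]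
    exact Iff.rfl
  rw [this]
  apply Measure.addHaar_submodule
  intro h
  have h1 : (EuclideanSpace.single i (1:ℝ)) ∈
      LinearMap.ker ((EuclideanSpace.proj (𝕜 := ℝ) i).toLinearMap) := h ▸ Submodule.mem_top
  have h2 : (EuclideanSpace.single i (1:ℝ)) i = 0 := LinearMap.mem_ker.mp h1
  rw [EuclideanSpace.single_apply] at h2
  simp at h2

lemma vol_Qc_eq_plus (r : ℝ) (σ : Fin d → Bool) :
    volume (Qc σ ∩ Metric.closedBall (0 : EuclideanSpace ℝ (Fin d)) r) =
      volume (Qc (fun _ => true) ∩ Metric.closedBall (0 : EuclideanSpace ℝ (Fin d)) r) := by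
  have hmp := (flipE (d := d) σ).measurePreserving
  have hpre : (flipE σ) ⁻¹' (Qc σ ∩ Metric.closedBall 0 r) =
      Qc (fun _ => true) ∩ Metric.closedBall 0 r := by
    ext x
    simp only [Set.mem_preimage, Set.mem_inter_iff, Qc, Set.mem_setOf_eq,
      mem_closedBall_zero_iff, (flipE σ).norm_map]
    constructor
    · rintro ⟨h1, h2⟩
      refine ⟨fun i => ?_, h2⟩
      have := h1 i
      rw [flipE_apply] at this
      simp only [if_true]
      unfold sgn at this
      by_cases h : σ i <;> simp [h] at this <;> linarith
    · rintro ⟨h1, h2⟩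
      refine ⟨fun i => ?_, h2⟩
      have := h1 i
      simp only [if_true] at this
      rw [flipE_apply]
      unfold sgn
      by_cases h : σ i <;> simp [h] <;> nlinarith
  rw [← hmp.measure_preimage
    (((isClosed_Qc σ).measurableSet.inter Metric.isClosed_closedBall.measurableSet).nullMeasurableSet),
    hpre]

lemma vol_Qo_eq_Qc (r : ℝ) (σ : Fin d → Bool) :
    volume (Qo σ ∩ Metric.closedBall (0 : EuclideanSpace ℝ (Fin d)) r) =
      volume (Qc σ ∩ Metric.closedBall (0 : EuclideanSpace ℝ (Fin d)) r) := by
  apply le_antisymm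
  · exact measure_mono (Set.inter_subset_inter_left _ (Qo_subset_Qc σ))
  · have hsub : Qc σ ∩ Metric.closedBall (0 : EuclideanSpace ℝ (Fin d)) r ⊆
        (Qo σ ∩ Metric.closedBall 0 r) ∪ ⋃ i, {x : EuclideanSpace ℝ (Fin d) | x i = 0} := by
      rintro x ⟨hx, hb⟩
      by_cases h : ∃ i, x i = 0
      · exact Or.inr (Set.mem_iUnion.2 ⟨h.choose, h.choose_spec⟩)
      · push_neg at h
        refine Or.inl ⟨fun i => ?_, hb⟩
        have := hx i
        by_cases hσ : σ i <;> simp [hσ] at this ⊢ <;>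
          exact lt_of_le_of_ne (by linarith) (by intro he; exact h i (by linarith [he]))
    calc volume (Qc σ ∩ Metric.closedBall (0 : EuclideanSpace ℝ (Fin d)) r)
        ≤ volume ((Qo σ ∩ Metric.closedBall 0 r) ∪
            ⋃ i, {x : EuclideanSpace ℝ (Fin d) | x i = 0}) := measure_mono hsub
      _ ≤ volume (Qo σ ∩ Metric.closedBall 0 r) +
            volume (⋃ i, {x : EuclideanSpace ℝ (Fin d) | x i = 0}) := measure_union_le _ _
      _ = volume (Qo σ ∩ Metric.closedBall 0 r) := by
          rw [measure_iUnion_null fun i => hyperplane_null i, add_zero]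

lemma vol_ball_eq_sum (r : ℝ) :
    volume (Metric.closedBall (0 : EuclideanSpace ℝ (Fin d)) r) =
      2 ^ d * volume (Qc (fun _ => true) ∩ Metric.closedBall
        (0 : EuclideanSpace ℝ (Fin d)) r) := by
  classical
  set B := Metric.closedBall (0 : EuclideanSpace ℝ (Fin d)) r with hB
  have hdisj : Pairwise (Function.onFun Disjoint (fun σ : Fin d → Bool => Qo σ ∩ B)) := by
    intro σ τ hστ
    refine Set.disjoint_left.2 ?_
    rintro x ⟨hxσ, -⟩ ⟨hxτ, -⟩
    have : σ ≠ τ := hστ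
    obtain ⟨i, hi⟩ := Function.ne_iff.1 this
    have h1 := hxσ i
    have h2 := hxτ i
    cases hσ : σ i <;> cases hτ : τ i <;> simp [hσ, hτ] at h1 h2 hi <;> linarith
  have hmeas : ∀ σ : Fin d → Bool, MeasurableSet (Qo σ ∩ B) := fun σ =>
    (isOpen_Qo σ).measurableSet.inter Metric.isClosed_closedBall.measurableSet
  have hunion : volume (⋃ σ : Fin d → Bool, Qo σ ∩ B) =
      ∑ σ : Fin d → Bool, volume (Qo σ ∩ B) := by
    rw [measure_iUnion hdisj hmeas, tsum_fintype]
  have hcover : B ⊆ (⋃ i, {x : EuclideanSpace ℝ (Fin d) | x i = 0}) ∪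
      ⋃ σ : Fin d → Bool, Qo σ ∩ B := by
    intro x hx
    by_cases h : ∃ i, x i = 0
    · exact Or.inl (Set.mem_iUnion.2 ⟨h.choose, h.choose_spec⟩)
    · push_neg at h
      refine Or.inr (Set.mem_iUnion.2 ⟨fun i => decide (0 < x i), ⟨fun i => ?_, hx⟩⟩)
      by_cases h0 : 0 < x i
      · rw [if_pos (by simp [h0])]
        exact h0
      · rw [if_neg (by simp [h0])]
        exact lt_of_le_of_ne (not_lt.1 h0) (h i)
  have key : ∀ σ : Fin d → Bool, volume (Qo σ ∩ B) =
      volume (Qc (fun _ => true) ∩ B) := fun σ => by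
    simp only [hB]
    rw [vol_Qo_eq_Qc, vol_Qc_eq_plus]
  apply le_antisymm
  · calc volume B ≤ volume ((⋃ i, {x : EuclideanSpace ℝ (Fin d) | x i = 0}) ∪
          ⋃ σ : Fin d → Bool, Qo σ ∩ B) := measure_mono hcover
      _ ≤ volume (⋃ i, {x : EuclideanSpace ℝ (Fin d) | x i = 0}) +
          volume (⋃ σ : Fin d → Bool, Qo σ ∩ B) := measure_union_le _ _
      _ = volume (⋃ σ : Fin d → Bool, Qo σ ∩ B) := by
          rw [measure_iUnion_null fun i => hyperplane_null i, zero_add]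
      _ = ∑ σ : Fin d → Bool, volume (Qo σ ∩ B) := hunion
      _ = ∑ _σ : Fin d → Bool, volume (Qc (fun _ => true) ∩ B) := by
          exact Finset.sum_congr rfl fun σ _ => key σ
      _ = 2 ^ d * volume (Qc (fun _ => true) ∩ B) := by
          rw [Finset.sum_const, Finset.card_univ, Fintype.card_fun]
          simp [nsmul_eq_mul]
  · calc (2 : ENNReal) ^ d * volume (Qc (fun _ => true) ∩ B)
        = ∑ _σ : Fin d → Bool, volume (Qc (fun _ => true) ∩ B) := by
          rw [Finset.sum_const, Finset.card_univ, Fintype.card_fun]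
          simp [nsmul_eq_mul]
      _ = ∑ σ : Fin d → Bool, volume (Qo σ ∩ B) :=
          Finset.sum_congr rfl fun σ _ => (key σ).symm
      _ = volume (⋃ σ : Fin d → Bool, Qo σ ∩ B) := hunion.symm
      _ ≤ volume B := measure_mono (Set.iUnion_subset fun σ => Set.inter_subset_right)

end Aux

/-- for `u, v ∈ [0,1]^d` with `‖u - v‖ ≤ 1/2`, letting
`I := {i : 0 ≤ u⁽ⁱ⁾ ≤ 1/2}` and
`M := {w : ‖w - u‖ ≤ ‖u - v‖, w⁽ⁱ⁾ ≥ u⁽ⁱ⁾ for i ∈ I, w⁽ʲ⁾ ≤ u⁽ʲ⁾ for j ∉ I}`,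
one has `M ⊆ G(u,v)`, `vol[M] = 2^{-d} vol[H(u,v)]`, and hence
`vol[G(u,v)] ≥ 2^{-d} vol[H(u,v)]`. -/
theorem Gset_volume_lower_bound_small_radius (d : ℕ) (hd : 0 < d)
    (u v : EuclideanSpace ℝ (Fin d)) (hu : u ∈ unitCube d) (hv : v ∈ unitCube d)
    (huv : ‖u - v‖ ≤ 1 / 2) :
    {w : EuclideanSpace ℝ (Fin d) | ‖w - u‖ ≤ ‖u - v‖ ∧
          ∀ i : Fin d, ((0 ≤ u i ∧ u i ≤ 1 / 2) → u i ≤ w i) ∧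
            (¬(0 ≤ u i ∧ u i ≤ 1 / 2) → w i ≤ u i)} ⊆ Gset u v ∧
      (volume {w : EuclideanSpace ℝ (Fin d) | ‖w - u‖ ≤ ‖u - v‖ ∧
          ∀ i : Fin d, ((0 ≤ u i ∧ u i ≤ 1 / 2) → u i ≤ w i) ∧
            (¬(0 ≤ u i ∧ u i ≤ 1 / 2) → w i ≤ u i)}).toReal =
        ((2 : ℝ) ^ d)⁻¹ * (volume (Hset u v)).toReal ∧
      ((2 : ℝ) ^ d)⁻¹ * (volume (Hset u v)).toReal ≤ (volume (Gset u v)).toReal := by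
  classical
  set r := ‖u - v‖ with hr
  set M := {w : EuclideanSpace ℝ (Fin d) | ‖w - u‖ ≤ ‖u - v‖ ∧
          ∀ i : Fin d, ((0 ≤ u i ∧ u i ≤ 1 / 2) → u i ≤ w i) ∧
            (¬(0 ≤ u i ∧ u i ≤ 1 / 2) → w i ≤ u i)} with hM
  have hsub : ∀ (w : EuclideanSpace ℝ (Fin d)) (i : Fin d), (w - u) i = w i - u i :=
    fun w i => rfl
  -- Part 1 : M ⊆ Gset u v
  have part1 : M ⊆ Gset u v := by
    rintro w ⟨hw1, hw2⟩
    have habs : ∀ i, |w i - u i| ≤ r := fun i => by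
      have := abs_coord_le_norm (w - u) i
      rw [hsub] at this
      exact this.trans hw1
    constructor
    · show w ∈ Metric.closedBall u ‖v - u‖
      rw [Metric.mem_closedBall, dist_eq_norm, norm_sub_rev v u]
      exact hw1
    · show ∀ i ∈ (Set.univ : Set (Fin d)), w i ∈ Set.Icc (0:ℝ) 1
      intro i _
      have hui : u i ∈ Set.Icc (0:ℝ) 1 :=
        (show ∀ i ∈ (Set.univ : Set (Fin d)), u i ∈ Set.Icc (0:ℝ) 1 from hu) i (Set.mem_univ i)
      have h1 : |w i - u i| ≤ 1/2 := (habs i).trans huv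
      rw [abs_le] at h1
      by_cases hc : 0 ≤ u i ∧ u i ≤ 1/2
      · have := (hw2 i).1 hc
        exact ⟨le_trans hc.1 this, by linarith [hc.2, h1.2]⟩
      · have := (hw2 i).2 hc
        have hgt : 1/2 < u i := by
          rcases not_and_or.mp hc with h | h
          · exact absurd hui.1 h
          · linarith [not_le.mp h]
        exact ⟨by linarith [h1.1], le_trans this hui.2⟩
  -- the sign vector
  set σ : Fin d → Bool := fun i => decide (0 ≤ u i ∧ u i ≤ 1/2) with hσ
  set B := Metric.closedBall (0 : EuclideanSpace ℝ (Fin d)) r with hB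
  have hMeq : M = (fun w : EuclideanSpace ℝ (Fin d) => w + (-u)) ⁻¹' (Qc σ ∩ B) := by
    ext w
    simp only [hM, Set.mem_setOf_eq, Set.mem_preimage, Set.mem_inter_iff, Qc,
      mem_closedBall_zero_iff, hB]
    have hadd : ∀ i, (w + (-u)) i = w i - u i := fun i => by
      rw [← sub_eq_add_neg]; exact hsub w i
    have hnorm : ‖w + (-u)‖ = ‖w - u‖ := by rw [← sub_eq_add_neg]
    constructor
    · rintro ⟨h1, h2⟩
      refine ⟨fun i => ?_, by rwa [hnorm]⟩
      rw [hadd]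
      by_cases hc : 0 ≤ u i ∧ u i ≤ 1/2
      · rw [if_pos (by simpa [hσ] using hc)]
        linarith [(h2 i).1 hc]
      · rw [if_neg (by simpa [hσ] using hc)]
        linarith [(h2 i).2 hc]
    · rintro ⟨h1, h2⟩
      refine ⟨by rwa [hnorm] at h2, fun i => ?_⟩
      have := h1 i
      rw [hadd] at this
      by_cases hc : 0 ≤ u i ∧ u i ≤ 1/2
      · rw [if_pos (by simpa [hσ] using hc)] at this
        exact ⟨fun _ => by linarith, fun h => absurd hc h⟩
      · rw [if_neg (by simpa [hσ] using hc)] at this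
        exact ⟨fun h => absurd h hc, fun _ => by linarith⟩
  set q := volume (Qc (fun _ => true) ∩ B) with hq
  have hvolM : volume M = q := by
    rw [hMeq, measure_preimage_add_right volume (-u) (Qc σ ∩ B), hB, vol_Qc_eq_plus]
  have hvolH : volume (Hset u v) = 2 ^ d * q := by
    have h1 : volume (Hset u v) = volume B := by
      rw [Hset, norm_sub_rev v u, ← hr, hB]
      exact Measure.addHaar_closedBall_center volume u r
    rw [h1, hB, vol_ball_eq_sum]
  have hBfin : volume B ≠ ⊤ := (MeasureTheory.measure_closedBall_lt_top).ne
  have hqfin : q ≠ ⊤ :=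
    ((measure_mono Set.inter_subset_right).trans_lt hBfin.lt_top).ne
  have h2d : ((2 : ENNReal) ^ d).toReal = (2:ℝ) ^ d := by simp
  have part2 : (volume M).toReal = ((2 : ℝ) ^ d)⁻¹ * (volume (Hset u v)).toReal := by
    rw [hvolM, hvolH, ENNReal.toReal_mul, h2d]
    field_simp
  have hHfin : volume (Hset u v) ≠ ⊤ := by
    rw [hvolH]
    exact ENNReal.mul_ne_top (by simp) hqfin
  have hGfin : volume (Gset u v) ≠ ⊤ :=
    ((measure_mono Set.inter_subset_left).trans_lt hHfin.lt_top).ne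
  refine ⟨part1, part2, ?_⟩
  rw [← part2]
  exact ENNReal.toReal_mono hGfin (measure_mono part1)
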